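/- Submodularity-type inequality for the state–action cost in the random-arrival model (key step in the proof of Theorem 3). Let V : X → ℝ be monotone with respect to ⪯ and let w ∈ W. Let X¹, X² ∈ X satisfy: A¹_{b,k} = A²_{b,k}, A¹_{r,k} = A²_{r,k} and D¹_k = D²_k for all k; A¹_{d,k} ≥ A²_{d,k} for every k with w_k = (1,2); and A¹_{d,k} = A²_{d,k} for every other k. Then for every w' ∈ W, J_V(X¹, w) − J_V(X¹, w') ≤ J_V(X², w) − J_V(X², w'). -/

import Mathlib

namespace AoIRandom

/-- Per-device control action: idle `(0,0)`, continue the current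
in-transmission update `(1,1)`, or start transmitting the buffered update
`(1,2)`. -/
inductive Act : Type
  | idle : Act
  | cont : Act
  | new  : Act
  deriving DecidableEq

instance : Fintype Act :=
  ⟨{Act.idle, Act.cont, Act.new}, by intro a; cases a <;> simp⟩

/-- Per-device state `(A_b, A_d, A_r, D)`. -/
abbrev S : Type := ℕ × ℕ × ℕ × ℕ

/-- Success successor under `(1,1)` when a new update arrives. -/
def sCont1 (L Ahd Ahr : ℕ) (x : S) : S :=
  if x.2.2.2 = 1 then (1, 1, min (x.2.1 + 1) Ahr, L)
  else (1, min (x.2.1 + 1) Ahd, min (x.2.2.1 + 1) Ahr, x.2.2.2 - 1)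

/-- Success successor under `(1,1)` when no update arrives. -/
def sCont2 (L Ahb Ahd Ahr : ℕ) (x : S) : S :=
  if x.2.2.2 = 1 then
    (min (x.1 + 1) Ahb, min (x.1 + 1) Ahd, min (x.2.1 + 1) Ahr, L)
  else
    (min (x.1 + 1) Ahb, min (x.2.1 + 1) Ahd, min (x.2.2.1 + 1) Ahr, x.2.2.2 - 1)

/-- Failure successor under `(1,1)` when a new update arrives; this is also the
unscheduled successor `X¹_{k,un}` under `(0,0)`. -/
def fCont1 (Ahd Ahr : ℕ) (x : S) : S :=
  (1, min (x.2.1 + 1) Ahd, min (x.2.2.1 + 1) Ahr, x.2.2.2)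

/-- Failure successor under `(1,1)` when no update arrives; this is also the
unscheduled successor `X²_{k,un}` under `(0,0)`. -/
def fCont2 (Ahb Ahd Ahr : ℕ) (x : S) : S :=
  (min (x.1 + 1) Ahb, min (x.2.1 + 1) Ahd, min (x.2.2.1 + 1) Ahr, x.2.2.2)

/-- Success successor under `(1,2)` when a new update arrives. -/
def sNew1 (L Ahr : ℕ) (x : S) : S := (1, 1, min (x.2.2.1 + 1) Ahr, L - 1)

/-- Success successor under `(1,2)` when no update arrives. -/
def sNew2 (L Ahb Ahd Ahr : ℕ) (x : S) : S :=
  (min (x.1 + 1) Ahb, min (x.1 + 1) Ahd, min (x.2.2.1 + 1) Ahr, L - 1)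

/-- Failure successor under `(1,2)` when a new update arrives. -/
def fNew1 (L Ahr : ℕ) (x : S) : S := (1, 1, min (x.2.2.1 + 1) Ahr, L)

/-- Failure successor under `(1,2)` when no update arrives. -/
def fNew2 (L Ahb Ahd Ahr : ℕ) (x : S) : S :=
  (min (x.1 + 1) Ahb, min (x.1 + 1) Ahd, min (x.2.2.1 + 1) Ahr, L)

/-- Per-device transition kernel `P_k(x' | x, a)` in the random-arrival model. -/
def Pk (lam rho : ℝ) (L Ahb Ahd Ahr : ℕ) (x x' : S) : Act → ℝ
  | Act.idle =>
      rho * (if x' = fCont1 Ahd Ahr x then 1 else 0) +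
        (1 - rho) * (if x' = fCont2 Ahb Ahd Ahr x then 1 else 0)
  | Act.cont =>
      rho * lam * (if x' = sCont1 L Ahd Ahr x then 1 else 0) +
        rho * (1 - lam) * (if x' = fCont1 Ahd Ahr x then 1 else 0) +
        (1 - rho) * lam * (if x' = sCont2 L Ahb Ahd Ahr x then 1 else 0) +
        (1 - rho) * (1 - lam) * (if x' = fCont2 Ahb Ahd Ahr x then 1 else 0)
  | Act.new =>
      rho * lam * (if x' = sNew1 L Ahr x then 1 else 0) +
        rho * (1 - lam) * (if x' = fNew1 L Ahr x then 1 else 0) +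
        (1 - rho) * lam * (if x' = sNew2 L Ahb Ahd Ahr x then 1 else 0) +
        (1 - rho) * (1 - lam) * (if x' = fNew2 L Ahb Ahd Ahr x then 1 else 0)

/-- Per-device state space `{0,…,Âb} × {0,…,Âd} × {0,…,Âr} × {1,…,L}`. -/
def spaceS (L Ahb Ahd Ahr : ℕ) : Finset S :=
  Finset.range (Ahb + 1) ×ˢ
    (Finset.range (Ahd + 1) ×ˢ (Finset.range (Ahr + 1) ×ˢ Finset.Icc 1 L))

/-- Joint state space `X = X_1 × ⋯ × X_K`. -/
def jointSpace {K : ℕ} (L Ahb Ahd Ahr : Fin K → ℕ) : Finset (Fin K → S) :=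
  Fintype.piFinset fun k => spaceS (L k) (Ahb k) (Ahd k) (Ahr k)

/-- Joint transition kernel `P(X' | X, w) = ∏ₖ P_k(X'_k | X_k, w_k)`. -/
def Pjoint {K : ℕ} (lam rho : Fin K → ℝ) (L Ahb Ahd Ahr : Fin K → ℕ)
    (x x' : Fin K → S) (w : Fin K → Act) : ℝ :=
  ∏ k, Pk (lam k) (rho k) (L k) (Ahb k) (Ahd k) (Ahr k) (x k) (x' k) (w k)

/-- Feasible joint actions: at most `M` devices are scheduled. -/
def feasible (K M : ℕ) : Finset (Fin K → Act) :=
  Finset.univ.filter fun w => (Finset.univ.filter fun k => w k ≠ Act.idle).card ≤ M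

lemma feasible_nonempty (K M : ℕ) : (feasible K M).Nonempty := by
  refine ⟨fun _ => Act.idle, Finset.mem_filter.mpr ⟨Finset.mem_univ _, ?_⟩⟩
  simp

/-- The state–action cost `J_V(X, w) = Σₖ A_{r,k} + Σ_{X'∈X} P(X'|X,w) V(X')`. -/
def J {K : ℕ} (lam rho : Fin K → ℝ) (L Ahb Ahd Ahr : Fin K → ℕ)
    (V : (Fin K → S) → ℝ) (x : Fin K → S) (w : Fin K → Act) : ℝ :=
  (∑ k, ((x k).2.2.1 : ℝ)) +
    ∑ x' ∈ jointSpace L Ahb Ahd Ahr, Pjoint lam rho L Ahb Ahd Ahr x x' w * V x'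

/-- Componentwise order on per-device states: `A¹_b ≤ A²_b`, `A¹_d ≤ A²_d`,
`A¹_r ≤ A²_r` and `D¹ = D²`. -/
def xleS (x y : S) : Prop :=
  x.1 ≤ y.1 ∧ x.2.1 ≤ y.2.1 ∧ x.2.2.1 ≤ y.2.2.1 ∧ x.2.2.2 = y.2.2.2


/-! ### Auxiliary machinery: outcome decomposition of the kernel -/

/-- Weight of an outcome `(arrival?, success?)`. -/
def wgt (lam rho : ℝ) (o : Bool × Bool) : ℝ :=
  (if o.1 then rho else 1 - rho) * (if o.2 then lam else 1 - lam)

/-- Successor state given action and outcome. -/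
def succA (L Ahb Ahd Ahr : ℕ) (a : Act) (o : Bool × Bool) (x : S) : S :=
  match a, o with
  | Act.idle, (true, _) => fCont1 Ahd Ahr x
  | Act.idle, (false, _) => fCont2 Ahb Ahd Ahr x
  | Act.cont, (true, true) => sCont1 L Ahd Ahr x
  | Act.cont, (true, false) => fCont1 Ahd Ahr x
  | Act.cont, (false, true) => sCont2 L Ahb Ahd Ahr x
  | Act.cont, (false, false) => fCont2 Ahb Ahd Ahr x
  | Act.new, (true, true) => sNew1 L Ahr x
  | Act.new, (true, false) => fNew1 L Ahr x
  | Act.new, (false, true) => sNew2 L Ahb Ahd Ahr x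
  | Act.new, (false, false) => fNew2 L Ahb Ahd Ahr x

lemma wgt_nonneg {lam rho : ℝ} (h1 : 0 ≤ lam) (h2 : lam ≤ 1)
    (h3 : 0 ≤ rho) (h4 : rho ≤ 1) (o : Bool × Bool) : 0 ≤ wgt lam rho o := by
  unfold wgt
  have a : (0:ℝ) ≤ if o.1 then rho else 1 - rho := by split <;> linarith
  have b : (0:ℝ) ≤ if o.2 then lam else 1 - lam := by split <;> linarith
  exact mul_nonneg a b

lemma Pk_eq_sum (lam rho : ℝ) (L Ahb Ahd Ahr : ℕ) (x x' : S) (a : Act) :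
    Pk lam rho L Ahb Ahd Ahr x x' a =
      ∑ o : Bool × Bool, wgt lam rho o *
        (if x' = succA L Ahb Ahd Ahr a o x then 1 else 0) := by
  cases a <;>
    simp [Pk, wgt, succA, Fintype.sum_prod_type, Fintype.sum_bool] <;>
    split_ifs <;> simp_all <;> ring

lemma succA_mem {L Ahb Ahd Ahr : ℕ} (hL : 2 ≤ L) (hAb : 1 ≤ Ahb)
    (hAd : 1 ≤ Ahd) (hAr : 1 ≤ Ahr) (a : Act) (o : Bool × Bool) {x : S}
    (hx : x ∈ spaceS L Ahb Ahd Ahr) :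
    succA L Ahb Ahd Ahr a o x ∈ spaceS L Ahb Ahd Ahr := by
  obtain ⟨b, d, r, D⟩ := x
  obtain ⟨o1, o2⟩ := o
  simp only [spaceS, Finset.mem_product, Finset.mem_range, Finset.mem_Icc] at hx
  cases a <;> cases o1 <;> cases o2 <;>
    simp only [succA, sCont1, sCont2, fCont1, fCont2, sNew1, sNew2, fNew1,
      fNew2, spaceS, Finset.mem_product, Finset.mem_range, Finset.mem_Icc,
      and_true, true_and] <;>
    ((try split_ifs) <;> ((try dsimp only); omega))

lemma succA_mono (L Ahb Ahd Ahr : ℕ) (a : Act) (o : Bool × Bool) {x y : S}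
    (h : xleS x y) :
    xleS (succA L Ahb Ahd Ahr a o x) (succA L Ahb Ahd Ahr a o y) := by
  obtain ⟨b, d, r, D⟩ := x
  obtain ⟨b', d', r', D'⟩ := y
  obtain ⟨o1, o2⟩ := o
  simp only [xleS] at h
  cases a <;> cases o1 <;> cases o2 <;>
    simp only [succA, sCont1, sCont2, fCont1, fCont2, sNew1, sNew2, fNew1,
      fNew2] <;>
    ((try split_ifs) <;> (simp only [xleS, and_true]; (try dsimp only); omega))

lemma succA_new_eq (L Ahb Ahd Ahr : ℕ) (o : Bool × Bool) {x y : S}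
    (h1 : x.1 = y.1) (h3 : x.2.2.1 = y.2.2.1) (h4 : x.2.2.2 = y.2.2.2) :
    succA L Ahb Ahd Ahr Act.new o x = succA L Ahb Ahd Ahr Act.new o y := by
  obtain ⟨b, d, r, D⟩ := x
  obtain ⟨b', d', r', D'⟩ := y
  obtain ⟨o1, o2⟩ := o
  simp only at h1 h3 h4
  subst h1 h3 h4
  cases o1 <;> cases o2 <;> simp [succA, sNew1, sNew2, fNew1, fNew2]

/-- Expansion of `J` over outcome profiles. -/
lemma J_expand {K : ℕ} (lam rho : Fin K → ℝ) (L Ahb Ahd Ahr : Fin K → ℕ)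
    (hL : ∀ k, 2 ≤ L k) (hAb : ∀ k, 1 ≤ Ahb k) (hAd : ∀ k, 1 ≤ Ahd k)
    (hAr : ∀ k, 1 ≤ Ahr k) (V : (Fin K → S) → ℝ) (x : Fin K → S)
    (hx : x ∈ jointSpace L Ahb Ahd Ahr) (w : Fin K → Act) :
    J lam rho L Ahb Ahd Ahr V x w =
      (∑ k, ((x k).2.2.1 : ℝ)) +
        ∑ ω : Fin K → Bool × Bool,
          (∏ k, wgt (lam k) (rho k) (ω k)) *
            V (fun k => succA (L k) (Ahb k) (Ahd k) (Ahr k) (w k) (ω k) (x k)) := by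
  unfold J
  congr 1
  have hP : ∀ x' : Fin K → S, Pjoint lam rho L Ahb Ahd Ahr x x' w =
      ∑ ω : Fin K → Bool × Bool,
        (∏ k, wgt (lam k) (rho k) (ω k)) *
          (if x' = (fun k => succA (L k) (Ahb k) (Ahd k) (Ahr k) (w k) (ω k) (x k))
            then 1 else 0) := by
    intro x'
    unfold Pjoint
    rw [Finset.prod_congr rfl fun k _ =>
      Pk_eq_sum (lam k) (rho k) (L k) (Ahb k) (Ahd k) (Ahr k) (x k) (x' k) (w k)]
    rw [Finset.prod_univ_sum]
    rw [Fintype.piFinset_univ]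
    refine Finset.sum_congr rfl fun ω _ => ?_
    rw [Finset.prod_mul_distrib, Finset.prod_boole]
    congr 1
    simp [funext_iff]
  calc ∑ x' ∈ jointSpace L Ahb Ahd Ahr, Pjoint lam rho L Ahb Ahd Ahr x x' w * V x'
      = ∑ x' ∈ jointSpace L Ahb Ahd Ahr, ∑ ω : Fin K → Bool × Bool,
          (if x' = (fun k => succA (L k) (Ahb k) (Ahd k) (Ahr k) (w k) (ω k) (x k))
            then (∏ k, wgt (lam k) (rho k) (ω k)) *
              V (fun k => succA (L k) (Ahb k) (Ahd k) (Ahr k) (w k) (ω k) (x k))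
            else 0) := by
        refine Finset.sum_congr rfl fun x' _ => ?_
        rw [hP x', Finset.sum_mul]
        refine Finset.sum_congr rfl fun ω _ => ?_
        by_cases h : x' = fun k => succA (L k) (Ahb k) (Ahd k) (Ahr k) (w k) (ω k) (x k)
        · subst h; simp
        · simp [h]
    _ = ∑ ω : Fin K → Bool × Bool, ∑ x' ∈ jointSpace L Ahb Ahd Ahr,
          (if x' = (fun k => succA (L k) (Ahb k) (Ahd k) (Ahr k) (w k) (ω k) (x k))
            then (∏ k, wgt (lam k) (rho k) (ω k)) *
              V (fun k => succA (L k) (Ahb k) (Ahd k) (Ahr k) (w k) (ω k) (x k))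
            else 0) := Finset.sum_comm
    _ = _ := by
        refine Finset.sum_congr rfl fun ω _ => ?_
        rw [Finset.sum_ite_eq']
        rw [if_pos]
        simp only [jointSpace, Fintype.mem_piFinset] at hx ⊢
        exact fun k => succA_mem (hL k) (hAb k) (hAd k) (hAr k) (w k) (ω k) (hx k)

/-- submodularity-type inequality for the state–action cost in
the random-arrival model. -/
theorem submodularity_state_action_cost_random
    (K M : ℕ) (hK : 1 ≤ K) (hM1 : 1 ≤ M) (hM2 : M ≤ K)
    (lam rho : Fin K → ℝ) (L Ahb Ahd Ahr : Fin K → ℕ)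
    (hlam : ∀ k, 0 < lam k ∧ lam k ≤ 1) (hrho : ∀ k, 0 ≤ rho k ∧ rho k ≤ 1)
    (hL : ∀ k, 2 ≤ L k) (hAb : ∀ k, 1 ≤ Ahb k)
    (hAd : ∀ k, 1 ≤ Ahd k) (hAr : ∀ k, 1 ≤ Ahr k)
    (V : (Fin K → S) → ℝ)
    (hV : ∀ x1 ∈ jointSpace L Ahb Ahd Ahr, ∀ x2 ∈ jointSpace L Ahb Ahd Ahr,
      (∀ k, xleS (x1 k) (x2 k)) → V x1 ≤ V x2)
    (w : Fin K → Act) (hw : w ∈ feasible K M)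
    (x1 x2 : Fin K → S)
    (hx1 : x1 ∈ jointSpace L Ahb Ahd Ahr) (hx2 : x2 ∈ jointSpace L Ahb Ahd Ahr)
    (hb : ∀ k, (x1 k).1 = (x2 k).1)
    (hr : ∀ k, (x1 k).2.2.1 = (x2 k).2.2.1)
    (hd : ∀ k, (x1 k).2.2.2 = (x2 k).2.2.2)
    (hnew : ∀ k, w k = Act.new → (x2 k).2.1 ≤ (x1 k).2.1)
    (hoth : ∀ k, w k ≠ Act.new → (x1 k).2.1 = (x2 k).2.1) :
    ∀ w' ∈ feasible K M,
      J lam rho L Ahb Ahd Ahr V x1 w - J lam rho L Ahb Ahd Ahr V x1 w' ≤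
        J lam rho L Ahb Ahd Ahr V x2 w - J lam rho L Ahb Ahd Ahr V x2 w' := by
  intro w' hw'
  have hx2le1 : ∀ k, xleS (x2 k) (x1 k) := by
    intro k
    refine ⟨(hb k).symm.le, ?_, (hr k).symm.le, (hd k).symm⟩
    by_cases h : w k = Act.new
    · exact hnew k h
    · exact (hoth k h).symm.le
  have hx12 : ∀ k, w k ≠ Act.new → x1 k = x2 k := by
    intro k h
    have := hoth k h
    exact Prod.ext (hb k) (Prod.ext this (Prod.ext (hr k) (hd k)))
  have hrsum : ∑ k, ((x1 k).2.2.1 : ℝ) = ∑ k, ((x2 k).2.2.1 : ℝ) :=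
    Finset.sum_congr rfl fun k _ => by rw [hr k]
  have hmem : ∀ (x : Fin K → S), x ∈ jointSpace L Ahb Ahd Ahr →
      ∀ (u : Fin K → Act) (ω : Fin K → Bool × Bool),
      (fun k => succA (L k) (Ahb k) (Ahd k) (Ahr k) (u k) (ω k) (x k)) ∈
        jointSpace L Ahb Ahd Ahr := by
    intro x hx u ω
    simp only [jointSpace, Fintype.mem_piFinset] at hx ⊢
    exact fun k => succA_mem (hL k) (hAb k) (hAd k) (hAr k) (u k) (ω k) (hx k)
  have hWnn : ∀ ω : Fin K → Bool × Bool,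
      0 ≤ ∏ k, wgt (lam k) (rho k) (ω k) :=
    fun ω => Finset.prod_nonneg fun k _ =>
      wgt_nonneg (hlam k).1.le (hlam k).2 (hrho k).1 (hrho k).2 (ω k)
  rw [J_expand lam rho L Ahb Ahd Ahr hL hAb hAd hAr V x1 hx1 w,
    J_expand lam rho L Ahb Ahd Ahr hL hAb hAd hAr V x1 hx1 w',
    J_expand lam rho L Ahb Ahd Ahr hL hAb hAd hAr V x2 hx2 w,
    J_expand lam rho L Ahb Ahd Ahr hL hAb hAd hAr V x2 hx2 w']
  have hJw : ∑ ω : Fin K → Bool × Bool,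
        (∏ k, wgt (lam k) (rho k) (ω k)) *
          V (fun k => succA (L k) (Ahb k) (Ahd k) (Ahr k) (w k) (ω k) (x1 k)) =
      ∑ ω : Fin K → Bool × Bool,
        (∏ k, wgt (lam k) (rho k) (ω k)) *
          V (fun k => succA (L k) (Ahb k) (Ahd k) (Ahr k) (w k) (ω k) (x2 k)) := by
    refine Finset.sum_congr rfl fun ω _ => ?_
    congr 1
    congr 1
    funext k
    by_cases h : w k = Act.new
    · rw [h]; exact succA_new_eq _ _ _ _ (ω k) (hb k) (hr k) (hd k)
    · rw [hx12 k h]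
  have hJw' : ∑ ω : Fin K → Bool × Bool,
        (∏ k, wgt (lam k) (rho k) (ω k)) *
          V (fun k => succA (L k) (Ahb k) (Ahd k) (Ahr k) (w' k) (ω k) (x2 k)) ≤
      ∑ ω : Fin K → Bool × Bool,
        (∏ k, wgt (lam k) (rho k) (ω k)) *
          V (fun k => succA (L k) (Ahb k) (Ahd k) (Ahr k) (w' k) (ω k) (x1 k)) := by
    refine Finset.sum_le_sum fun ω _ => ?_
    refine mul_le_mul_of_nonneg_left ?_ (hWnn ω)
    exact hV _ (hmem x2 hx2 w' ω) _ (hmem x1 hx1 w' ω)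
      fun k => succA_mono _ _ _ _ _ (ω k) (hx2le1 k)
  linarith

end AoIRandom
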